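/- Let x ∈ ℝⁿ be a k-sparse vector with S := supp(x), let u ∈ ℝⁿ be arbitrary, let S′ := L_k(u) be an index set of k largest-in-magnitude entries of u, and let x′ ∈ ℝⁿ be any vector with supp(x′) ⊆ S′. Then ‖(x′ − x)_{complement of S′}‖₂ ≤ √2 · ‖(u − x)_Ω‖₂, where Ω := (S ∖ S′) ∪ (S′ ∖ S). -/
import Mathlib


/-- The Euclidean (ℓ₂) norm of a vector in ℝ^d. -/
noncomputable def l2 {d : ℕ} (v : Fin d → ℝ) : ℝ := Real.sqrt (∑ i, v i ^ 2)

/-- If `x` is `k`-sparse with `S = supp x`, `S'` is an index set of the `k`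
largest-in-magnitude entries of `u`, and `supp x' ⊆ S'`, then
`‖(x' - x)_{S'ᶜ}‖₂ ≤ √2 ‖(u - x)_Ω‖₂` where `Ω = (S ∖ S') ∪ (S' ∖ S)`. -/
theorem stmt15 {n k : ℕ} (x u x' : Fin n → ℝ)
    (hx : (Function.support x).ncard ≤ k)
    (S' : Set (Fin n)) (hS'card : S'.ncard = min k n)
    (hS'max : ∀ i ∈ S', ∀ j ∉ S', |u j| ≤ |u i|)
    (hx' : Function.support x' ⊆ S') :
    l2 (S'ᶜ.indicator (x' - x)) ≤ Real.sqrt 2 *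
      l2 (((Function.support x \ S') ∪ (S' \ Function.support x)).indicator (u - x)) := by
  classical
  set S := Function.support x with hS
  -- helper: sum of squared indicator is a sum over the finite set
  have key : ∀ (T : Set (Fin n)) (g : Fin n → ℝ),
      ∑ i, (T.indicator g i) ^ 2 = ∑ i ∈ T.toFinite.toFinset, g i ^ 2 := by
    intro T g
    rw [show (∑ i, (T.indicator g i) ^ 2)
        = ∑ i ∈ T.toFinite.toFinset, (T.indicator g i) ^ 2 from
      (Finset.sum_subset (Finset.subset_univ _) (fun i _ hi => by
        rw [Set.indicator_of_notMem (fun h => hi ((Set.Finite.mem_toFinset _).mpr h))]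
        ring)).symm]
    exact Finset.sum_congr rfl fun i hi => by
      rw [Set.indicator_of_mem ((Set.Finite.mem_toFinset _).mp hi)]
  set A := (S \ S').toFinite.toFinset with hA
  set B := (S' \ S).toFinite.toFinset with hB
  have hmemA : ∀ i, i ∈ A ↔ (i ∈ S ∧ i ∉ S') := by
    intro i; rw [hA, Set.Finite.mem_toFinset, Set.mem_diff]
  have hmemB : ∀ i, i ∈ B ↔ (i ∈ S' ∧ i ∉ S) := by
    intro i; rw [hB, Set.Finite.mem_toFinset, Set.mem_diff]
  -- x' vanishes off S'
  have hx'0 : ∀ i, i ∉ S' → x' i = 0 := by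
    intro i hi
    by_contra h
    exact hi (hx' h)
  have hx0 : ∀ i, i ∉ S → x i = 0 := by
    intro i hi
    by_contra h
    exact hi h
  -- LHS sum
  have hL : ∑ i, (S'ᶜ.indicator (x' - x) i) ^ 2 = ∑ i ∈ A, x i ^ 2 := by
    rw [key]
    have hAB : A ⊆ (S'ᶜ).toFinite.toFinset := by
      intro i hi
      rw [Set.Finite.mem_toFinset]
      exact ((hmemA i).mp hi).2
    rw [← Finset.sum_subset hAB (fun i hi hiA => by
      have h1 : i ∉ S' := (Set.Finite.mem_toFinset _).mp hi
      have h2 : i ∉ S := fun hiS => hiA ((hmemA i).mpr ⟨hiS, h1⟩)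
      simp [hx'0 i h1, hx0 i h2])]
    refine Finset.sum_congr rfl fun i hi => ?_
    have h1 : i ∉ S' := ((hmemA i).mp hi).2
    simp [hx'0 i h1]
  -- RHS sum
  have hdisj : Disjoint A B := by
    rw [Finset.disjoint_left]
    intro i hi hi'
    exact ((hmemA i).mp hi).2 ((hmemB i).mp hi').1
  have hR : ∑ i, (((S \ S') ∪ (S' \ S)).indicator (u - x) i) ^ 2
      = ∑ i ∈ A, (u i - x i) ^ 2 + ∑ i ∈ B, u i ^ 2 := by
    rw [key]
    have hU : ((S \ S') ∪ (S' \ S)).toFinite.toFinset = A ∪ B := by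
      ext i
      rw [Set.Finite.mem_toFinset, Set.mem_union, Finset.mem_union, hmemA i, hmemB i,
        Set.mem_diff, Set.mem_diff]
    rw [hU, Finset.sum_union hdisj]
    congr 1
    refine Finset.sum_congr rfl fun i hi => ?_
    have : x i = 0 := hx0 i ((hmemB i).mp hi).2
    simp [this]
  -- cardinality comparison
  have hcard : A.card ≤ B.card := by
    have hSfin : S.Finite := Set.toFinite S
    have hS'fin : S'.Finite := Set.toFinite S'
    have hSle : S.ncard ≤ S'.ncard := by
      rw [hS'card]
      refine le_min hx ?_
      calc S.ncard ≤ (Set.univ : Set (Fin n)).ncard :=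
            Set.ncard_le_ncard (Set.subset_univ _) Set.finite_univ
        _ = n := by simp [Set.ncard_univ]
    have hAeq : A = hSfin.toFinset \ hS'fin.toFinset := by
      ext i
      simp only [hmemA i, Finset.mem_sdiff, Set.Finite.mem_toFinset]
    have hBeq : B = hS'fin.toFinset \ hSfin.toFinset := by
      ext i
      simp only [hmemB i, Finset.mem_sdiff, Set.Finite.mem_toFinset]
    have h1 := Finset.card_sdiff_add_card_inter hSfin.toFinset hS'fin.toFinset
    have h2 := Finset.card_sdiff_add_card_inter hS'fin.toFinset hSfin.toFinset
    have hic : (hSfin.toFinset ∩ hS'fin.toFinset).card = (hS'fin.toFinset ∩ hSfin.toFinset).card := by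
      rw [Finset.inter_comm]
    have hSc : S.ncard = hSfin.toFinset.card := Set.ncard_eq_toFinset_card _ hSfin
    have hS'c : S'.ncard = hS'fin.toFinset.card := Set.ncard_eq_toFinset_card _ hS'fin
    rw [hAeq, hBeq]
    rw [hSc, hS'c] at hSle
    omega
  -- sum of u² over A ≤ over B
  have hsum : ∑ i ∈ A, u i ^ 2 ≤ ∑ i ∈ B, u i ^ 2 := by
    rcases A.eq_empty_or_nonempty with hAe | hAne
    · rw [hAe]
      simp only [Finset.sum_empty]
      exact Finset.sum_nonneg fun i _ => sq_nonneg _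
    · have hBne : B.Nonempty := by
        rw [← Finset.card_pos] at hAne ⊢
        omega
      set m := B.inf' hBne (fun j => u j ^ 2) with hm
      have hAm : ∀ i ∈ A, u i ^ 2 ≤ m := by
        intro i hi
        refine Finset.le_inf' hBne _ fun j hj => ?_
        have h := hS'max j ((hmemB j).mp hj).1 i ((hmemA i).mp hi).2
        nlinarith [abs_nonneg (u i), abs_nonneg (u j), sq_abs (u i), sq_abs (u j)]
      have hm0 : 0 ≤ m := Finset.le_inf' hBne _ fun j _ => sq_nonneg _
      calc ∑ i ∈ A, u i ^ 2 ≤ A.card • m := Finset.sum_le_card_nsmul A _ m hAm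
        _ = (A.card : ℝ) * m := by rw [nsmul_eq_mul]
        _ ≤ (B.card : ℝ) * m := by
            apply mul_le_mul_of_nonneg_right _ hm0
            exact_mod_cast hcard
        _ = B.card • m := by rw [nsmul_eq_mul]
        _ ≤ ∑ j ∈ B, u j ^ 2 := Finset.card_nsmul_le_sum B _ m fun j hj => Finset.inf'_le _ hj
  -- main inequality on sums
  have main : ∑ i, (S'ᶜ.indicator (x' - x) i) ^ 2
      ≤ 2 * ∑ i, (((S \ S') ∪ (S' \ S)).indicator (u - x) i) ^ 2 := by
    rw [hL, hR]
    have step : ∑ i ∈ A, x i ^ 2 ≤ ∑ i ∈ A, (2 * (u i - x i) ^ 2 + 2 * u i ^ 2) :=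
      Finset.sum_le_sum fun i _ => by nlinarith [sq_nonneg (u i - x i + u i)]
    rw [Finset.sum_add_distrib, ← Finset.mul_sum, ← Finset.mul_sum] at step
    linarith
  -- conclude via sqrt
  unfold l2
  rw [← Real.sqrt_mul (by norm_num : (0:ℝ) ≤ 2)]
  exact Real.sqrt_le_sqrt main
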